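/- Let (H1,H2) be a pair of hypergraphs over the same set of nodes. Then the number of configurations in the domain of any greedy strategy in the Robber and Captain game on (H1,H2) is at most |edges(H2)| · |nodes(H1)| · (|edges(H2)| · |nodes(H1)| + 1) + 1. -/

import Mathlib

/-! Common definitions: hypergraphs, components, the Robber and Captain game,
the Robber and Marshal game, tree projections, (generalized) hypertree decompositions. -/

variable {α : Type} [DecidableEq α]

/-- A hypergraph: a finite set of nodes and a finite set of hyperedges, each a subset of the
nodes, such that every node occurs in some hyperedge. -/
structure HGraph (α : Type) [DecidableEq α] where
  nodes : Finset α
  edges : Finset (Finset α)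
  edge_sub : ∀ h ∈ edges, h ⊆ nodes
  cover : ∀ x ∈ nodes, ∃ h ∈ edges, x ∈ h

namespace HGraph

/-- `X` and `Y` are `[M]`-adjacent: some hyperedge `h` satisfies `{X,Y} ⊆ h \ M`. -/
def MAdj (H : HGraph α) (M : Finset α) (X Y : α) : Prop :=
  ∃ h ∈ H.edges, X ∈ h ∧ Y ∈ h ∧ X ∉ M ∧ Y ∉ M

/-- An `[M]`-path: a sequence of consecutively `[M]`-adjacent nodes. -/
def MPath (H : HGraph α) (M : Finset α) : α → α → Prop :=
  Relation.ReflTransGen (H.MAdj M)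

/-- `W` is `[M]`-connected: every two nodes of `W` are joined by an `[M]`-path. -/
def MConn (H : HGraph α) (M W : Finset α) : Prop :=
  ∀ X ∈ W, ∀ Y ∈ W, H.MPath M X Y

/-- `C` is an `[M]`-component: a maximal `[M]`-connected nonempty subset of `nodes(H) \ M`. -/
def MComp (H : HGraph α) (M C : Finset α) : Prop :=
  C.Nonempty ∧ C ⊆ H.nodes \ M ∧ H.MConn M C ∧
    ∀ C' : Finset α, C ⊆ C' → C' ⊆ H.nodes \ M → H.MConn M C' → C' = C

/-- The frontier `Fr(C)`: the union of all hyperedges of `H` meeting `C`. -/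
def Fr (H : HGraph α) (C : Finset α) : Finset α :=
  (H.edges.filter fun h => (h ∩ C).Nonempty).sup id

/-- The border `∂C = Fr(C) \ C`. -/
def border (H : HGraph α) (C : Finset α) : Finset α := H.Fr C \ C

/-- `H1 ≤ H2`: every hyperedge of `H1` is contained in some hyperedge of `H2`. -/
def HLE (H1 H2 : HGraph α) : Prop := ∀ h ∈ H1.edges, ∃ h' ∈ H2.edges, h ⊆ h'

/-- `H` is acyclic iff it has a join tree: a tree on the hyperedges of `H` such that, for every
node `X`, the set of hyperedges containing `X` induces a connected subtree. -/
def IsAcyclicHG (H : HGraph α) : Prop :=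
  ∃ T : SimpleGraph {h : Finset α // h ∈ H.edges},
    T.IsTree ∧ ∀ X ∈ H.nodes,
      (T.induce {e : {h : Finset α // h ∈ H.edges} | X ∈ e.1}).Connected

/-- `H^k`: the hypergraph over the same nodes whose hyperedges are all unions of at most `k`
(and at least one) hyperedges of `H`. -/
def pow (H : HGraph α) (k : ℕ) (hk : 1 ≤ k) : HGraph α where
  nodes := H.nodes
  edges := (H.edges.powerset.filter fun S => S.Nonempty ∧ S.card ≤ k).image fun S => S.sup id
  edge_sub := by
    intro h hh
    simp only [Finset.mem_image, Finset.mem_filter, Finset.mem_powerset] at hh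
    obtain ⟨S, ⟨hS, _, _⟩, rfl⟩ := hh
    exact Finset.sup_le fun i hi => H.edge_sub i (hS hi)
  cover := by
    intro x hx
    obtain ⟨h, hh, hxh⟩ := H.cover x hx
    refine ⟨h, ?_, hxh⟩
    simp only [Finset.mem_image, Finset.mem_filter, Finset.mem_powerset]
    exact ⟨{h}, ⟨Finset.singleton_subset_iff.mpr hh, Finset.singleton_nonempty h,
      by simpa using hk⟩, by simp⟩

/-- The simplicial version of `H`: same nodes, and hyperedges all nonempty subsets of
hyperedges of `H`. -/
def simplicial (H : HGraph α) : HGraph α where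
  nodes := H.nodes
  edges := (H.edges.biUnion Finset.powerset).filter fun s => s.Nonempty
  edge_sub := by
    intro h hh
    simp only [Finset.mem_filter, Finset.mem_biUnion, Finset.mem_powerset] at hh
    obtain ⟨⟨e, he, hsub⟩, -⟩ := hh
    exact hsub.trans (H.edge_sub e he)
  cover := by
    intro x hx
    obtain ⟨h, hh, hxh⟩ := H.cover x hx
    refine ⟨h, ?_, hxh⟩
    simp only [Finset.mem_filter, Finset.mem_biUnion, Finset.mem_powerset]
    exact ⟨⟨h, hh, le_refl _⟩, ⟨x, hxh⟩⟩

end HGraph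

/-- A tree projection of `H1` with respect to `H2`: an acyclic hypergraph `Ha` over the nodes
of `H1` with `H1 ≤ Ha ≤ H2`. -/
def IsTreeProjection (Ha H1 H2 : HGraph α) : Prop :=
  Ha.nodes = H1.nodes ∧ Ha.IsAcyclicHG ∧ HGraph.HLE H1 Ha ∧ HGraph.HLE Ha H2

def HasTreeProjection (H1 H2 : HGraph α) : Prop := ∃ Ha, IsTreeProjection Ha H1 H2

/-! ### The Robber and Captain game -/

/-- A configuration `(h, M, C)`. -/
abbrev Config (α : Type) := Finset α × Finset α × Finset α

/-- The initial configuration `(∅, ∅, nodes(H1))`. -/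
def initConfig (H1 : HGraph α) : Config α := (∅, ∅, H1.nodes)

/-- `Cr` is a `[v, Mr]`-option: an `[Mr]`-component `Cr` of `H1` such that `C ∪ Cr` is
`[M ∩ Mr]`-connected, where `v = (h, M, C)`. -/
def IsOption (H1 : HGraph α) (v : Config α) (Mr Cr : Finset α) : Prop :=
  H1.MComp Mr Cr ∧ H1.MConn (v.2.1 ∩ Mr) (v.2.2 ∪ Cr)

/-- The successor relation of the strategy graph (arcs from a configuration in the domain to the
configurations resulting from the Captain's move and the Robber's choice of an option). -/
def StratSucc (H1 : HGraph α) (dom : Set (Config α))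
    (mv : Config α → Finset α × Finset α) (a b : Config α) : Prop :=
  a ∈ dom ∧ b.1 = (mv a).1 ∧ b.2.1 = (mv a).2 ∧ IsOption H1 a (mv a).2 b.2.2

/-- A strategy for the Captain in the Robber and Captain game on `(H1, H2)`. -/
structure Strategy (H1 H2 : HGraph α) where
  dom : Set (Config α)
  move : Config α → Finset α × Finset α
  init_mem : initConfig H1 ∈ dom
  valid : ∀ v ∈ dom, v = initConfig H1 ∨
    (v.1 ∈ H2.edges ∧ v.2.1 ⊆ v.1 ∧ H1.MComp v.2.1 v.2.2)
  move_edge : ∀ v ∈ dom, (move v).1 ∈ H2.edges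
  move_sub : ∀ v ∈ dom, (move v).2 ⊆ (move v).1 ∩ H1.Fr v.2.2
  closed : ∀ v ∈ dom, ∀ Cr : Finset α,
    IsOption H1 v (move v).2 Cr → ((move v).1, (move v).2, Cr) ∈ dom
  reach : ∀ v ∈ dom, Relation.ReflTransGen (StratSucc H1 dom move) (initConfig H1) v

namespace Strategy

variable {H1 H2 : HGraph α}

/-- The arc relation of the strategy graph `G(σ)`. -/
def Succ (σ : Strategy H1 H2) : Config α → Config α → Prop :=
  StratSucc H1 σ.dom σ.move

/-- `σ` is winning iff its strategy graph is acyclic. -/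
def Winning (σ : Strategy H1 H2) : Prop :=
  ∀ v : Config α, ¬ Relation.TransGen σ.Succ v v

/-- `σ` is monotone: every move is monotone, i.e. every option shrinks the component. -/
def IsMonotone (σ : Strategy H1 H2) : Prop :=
  ∀ v ∈ σ.dom, ∀ Cr : Finset α, IsOption H1 v (σ.move v).2 Cr → Cr ⊆ v.2.2

/-- `σ` is greedy: at `v = (h_p, M_p, C_p)` the move `(h_r, M_r)` satisfies
`M_r = h_r ∩ Fr(C_p)`, with `h_r = h_p` whenever `h_p ∩ C_p ≠ ∅` (otherwise `h_r` is an
arbitrary hyperedge of `H2`, which is guaranteed by `move_edge`). -/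
def Greedy (σ : Strategy H1 H2) : Prop :=
  ∀ v ∈ σ.dom, (σ.move v).2 = (σ.move v).1 ∩ H1.Fr v.2.2 ∧
    ((v.1 ∩ v.2.2).Nonempty → (σ.move v).1 = v.1)

/-- `σ` is nice: `σ(h_p, M_p, C_p) = (h_p, ∂C_p)` whenever `∂C_p ⊂ M_p`. -/
def Nice (σ : Strategy H1 H2) : Prop :=
  ∀ v ∈ σ.dom, H1.border v.2.2 ⊂ v.2.1 → σ.move v = (v.1, H1.border v.2.2)

end Strategy

/-! ### The Robber and Marshal game -/

/-- A configuration `(h, C)` of the Robber and Marshal game. -/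
abbrev MConfig (α : Type) := Finset α × Finset α

/-- The Robber's options in the Robber and Marshal game: `Cr` is an `[hr]`-component such that
`C ∪ Cr` is `[h ∩ hr]`-connected, where `v = (h, C)`. -/
def MarshalOption (H1 : HGraph α) (v : MConfig α) (hr Cr : Finset α) : Prop :=
  H1.MComp hr Cr ∧ H1.MConn (v.1 ∩ hr) (v.2 ∪ Cr)

/-- The successor relation of the Robber and Marshal game under a given Marshal strategy. -/
def MarSucc (H1 : HGraph α) (dom : Set (MConfig α)) (mv : MConfig α → Finset α)
    (a b : MConfig α) : Prop :=
  a ∈ dom ∧ ¬ a.2 ⊆ a.1 ∧ b.1 = mv a ∧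
    (MarshalOption H1 a (mv a) b.2 ∨
      ((¬ ∃ Cr : Finset α, MarshalOption H1 a (mv a) Cr) ∧ b.2 = ∅))

/-- A strategy for the Marshal in the Robber and Marshal game on `(H1, H2)`.
A configuration `(h, C)` with `C ⊆ h` is a capture configuration; at any other configuration of
the domain the Marshal moves to a hyperedge of `H2`. -/
structure MarshalStrategy (H1 H2 : HGraph α) where
  dom : Set (MConfig α)
  move : MConfig α → Finset α
  init_mem : (∅, H1.nodes) ∈ dom
  valid : ∀ v ∈ dom, v = ((∅ : Finset α), H1.nodes) ∨
    (v.1 ∈ H2.edges ∧ (H1.MComp v.1 v.2 ∨ v.2 = ∅))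
  move_edge : ∀ v ∈ dom, ¬ v.2 ⊆ v.1 → move v ∈ H2.edges
  closed : ∀ v ∈ dom, ¬ v.2 ⊆ v.1 → ∀ Cr : Finset α,
    MarshalOption H1 v (move v) Cr → (move v, Cr) ∈ dom
  closed_cap : ∀ v ∈ dom, ¬ v.2 ⊆ v.1 →
    (¬ ∃ Cr : Finset α, MarshalOption H1 v (move v) Cr) → ((move v, ∅) : MConfig α) ∈ dom
  reach : ∀ v ∈ dom,
    Relation.ReflTransGen (MarSucc H1 dom move) ((∅ : Finset α), H1.nodes) v

namespace MarshalStrategy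

variable {H1 H2 : HGraph α}

/-- The Marshal wins: starting from the initial configuration the game always ends in a capture
configuration; equivalently, the game graph of the strategy is acyclic. -/
def Winning (μ : MarshalStrategy H1 H2) : Prop :=
  ∀ v : MConfig α, ¬ Relation.TransGen (MarSucc H1 μ.dom μ.move) v v

/-- The Marshal strategy is monotone: in every move, every available component shrinks. -/
def IsMonotone (μ : MarshalStrategy H1 H2) : Prop :=
  ∀ v ∈ μ.dom, ¬ v.2 ⊆ v.1 → ∀ Cr : Finset α, MarshalOption H1 v (μ.move v) Cr → Cr ⊆ v.2

end MarshalStrategy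

/-! ### Rooted trees and (generalized) hypertree decompositions -/

/-- A finite rooted tree, encoded by a parent function on `Fin (size+1)`. -/
structure RTree where
  size : ℕ
  parent : Fin (size + 1) → Fin (size + 1)
  root : Fin (size + 1)
  parent_root : parent root = root
  reach_root : ∀ v, ∃ m : ℕ, parent^[m] v = root

namespace RTree

/-- Adjacency in the rooted tree. -/
def Adj (T : RTree) (a b : Fin (T.size + 1)) : Prop :=
  a ≠ b ∧ (T.parent a = b ∨ T.parent b = a)

/-- A set of vertices induces a connected subtree. -/
def ConnIn (T : RTree) (S : Set (Fin (T.size + 1))) : Prop :=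
  ∀ a ∈ S, ∀ b ∈ S,
    Relation.ReflTransGen (fun x y => T.Adj x y ∧ x ∈ S ∧ y ∈ S) a b

/-- `q` is a vertex of the subtree rooted at `p` (i.e. a descendant of `p`). -/
def Desc (T : RTree) (p q : Fin (T.size + 1)) : Prop :=
  ∃ m : ℕ, T.parent^[m] q = p

end RTree

/-- A generalized hypertree decomposition of `H`. -/
structure GHDec (H : HGraph α) where
  T : RTree
  chi : Fin (T.size + 1) → Finset α
  lam : Fin (T.size + 1) → Finset (Finset α)
  chi_sub : ∀ p, chi p ⊆ H.nodes
  lam_sub : ∀ p, lam p ⊆ H.edges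
  edge_cover : ∀ h ∈ H.edges, ∃ p, h ⊆ chi p
  conn : ∀ Y ∈ H.nodes, T.ConnIn {p | Y ∈ chi p}
  chi_cov : ∀ p, chi p ⊆ (lam p).sup id

namespace GHDec

variable {H : HGraph α}

/-- The decomposition has width at most `k`. -/
def WidthLE (D : GHDec H) (k : ℕ) : Prop := ∀ p, (D.lam p).card ≤ k

/-- Condition (4) of hypertree decompositions: for every vertex `p`, the intersection of
`⋃ λ(p)` with `⋃_{q in the subtree rooted at p} χ(q)` is contained in `χ(p)`. -/
def IsHD (D : GHDec H) : Prop :=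
  ∀ p, ∀ x ∈ (D.lam p).sup id, (∃ q, D.T.Desc p q ∧ x ∈ D.chi q) → x ∈ D.chi p

end GHDec


/-! ### Auxiliary material for STATEMENT 0 -/

section RCGreedyAux

open Classical

namespace RCGreedy

lemma mem_Fr {α : Type} [DecidableEq α] {H : HGraph α} {C : Finset α} {y : α} :
    y ∈ H.Fr C ↔ ∃ e ∈ H.edges, (e ∩ C).Nonempty ∧ y ∈ e := by
  constructor
  · intro hy
    rcases Finset.mem_sup.mp hy with ⟨e, he, hye⟩
    rcases Finset.mem_filter.mp he with ⟨he1, he2⟩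
    exact ⟨e, he1, he2, hye⟩
  · rintro ⟨e, he, hne, hye⟩
    exact Finset.mem_sup.mpr ⟨e, Finset.mem_filter.mpr ⟨he, hne⟩, hye⟩

lemma madj_symm {α : Type} [DecidableEq α] {H : HGraph α} {M : Finset α} {x y : α}
    (h : H.MAdj M x y) : H.MAdj M y x := by
  rcases h with ⟨e, he, hx, hy, hxM, hyM⟩
  exact ⟨e, he, hy, hx, hyM, hxM⟩

/-- Along a `[K]`-path starting in `C`, if `∂C ⊆ K`, one never leaves `C`. -/
lemma stays {α : Type} [DecidableEq α] {H : HGraph α} {C K : Finset α}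
    (hb : H.border C ⊆ K) {a b : α} (hp : H.MPath K a b) (ha : a ∈ C) : b ∈ C := by
  induction hp with
  | refl => exact ha
  | tail _ hstep ih =>
      rcases hstep with ⟨e, he, hxe, hye, hxK, hyK⟩
      by_contra hy
      have hFr : _ ∈ H.Fr C := mem_Fr.mpr ⟨e, he, ⟨_, Finset.mem_inter.mpr ⟨hxe, ih⟩⟩, hye⟩
      exact hyK (hb (Finset.mem_sdiff.mpr ⟨hFr, hy⟩))

lemma border_subset {α : Type} [DecidableEq α] {H : HGraph α} {M C : Finset α}
    (hC : H.MComp M C) : H.border C ⊆ M := by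
  intro y hy
  rcases Finset.mem_sdiff.mp hy with ⟨hyFr, hyC⟩
  by_contra hyM
  rcases mem_Fr.mp hyFr with ⟨e, he, ⟨w, hw⟩, hye⟩
  rcases Finset.mem_inter.mp hw with ⟨hwe, hwC⟩
  have hwM : w ∉ M := (Finset.mem_sdiff.mp (hC.2.1 hwC)).2
  have hadj : H.MAdj M y w := ⟨e, he, hye, hwe, hyM, hwM⟩
  have hyn : y ∈ H.nodes := H.edge_sub e he hye
  have hpy : ∀ b ∈ C, H.MPath M y b := fun b hb =>
    (Relation.ReflTransGen.single hadj).trans (hC.2.2.1 w hwC b hb)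
  have hpy' : ∀ a ∈ C, H.MPath M a y := fun a ha =>
    (hC.2.2.1 a ha w hwC).trans (Relation.ReflTransGen.single (madj_symm hadj))
  have hconn : H.MConn M (insert y C) := by
    intro a ha b hb
    rcases Finset.mem_insert.mp ha with ha1 | ha1
    · rcases Finset.mem_insert.mp hb with hb1 | hb1
      · rw [ha1, hb1]
        exact Relation.ReflTransGen.refl
      · rw [ha1]; exact hpy b hb1
    · rcases Finset.mem_insert.mp hb with hb1 | hb1
      · rw [hb1]; exact hpy' a ha1
      · exact hC.2.2.1 a ha1 b hb1
  have hins := hC.2.2.2 (insert y C) (Finset.subset_insert _ _)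
      (by
        intro z hz
        rcases Finset.mem_insert.mp hz with rfl | hz
        · exact Finset.mem_sdiff.mpr ⟨hyn, hyM⟩
        · exact hC.2.1 hz)
      hconn
  exact hyC (hins ▸ Finset.mem_insert_self y C)

lemma comp_unique {α : Type} [DecidableEq α] {H : HGraph α} {M C C' : Finset α}
    (hC : H.MComp M C) (hC' : H.MComp M C') {x : α} (hx : x ∈ C) (hx' : x ∈ C') : C = C' := by
  have hconn : H.MConn M (C ∪ C') := by
    intro a ha b hb
    have hax : H.MPath M a x := by
      rcases Finset.mem_union.mp ha with h | h
      · exact hC.2.2.1 a h x hx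
      · exact hC'.2.2.1 a h x hx'
    have hxb : H.MPath M x b := by
      rcases Finset.mem_union.mp hb with h | h
      · exact hC.2.2.1 x hx b h
      · exact hC'.2.2.1 x hx' b h
    exact hax.trans hxb
  have hsub : C ∪ C' ⊆ H.nodes \ M := Finset.union_subset hC.2.1 hC'.2.1
  have h1 := hC.2.2.2 (C ∪ C') Finset.subset_union_left hsub hconn
  have h2 := hC'.2.2.2 (C ∪ C') Finset.subset_union_right hsub hconn
  exact h1.symm.trans h2

lemma comp_repin {α : Type} [DecidableEq α] {H : HGraph α} {M M' C : Finset α}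
    (hC : H.MComp M C) (hb : H.border C ⊆ M') (hd : ∀ z ∈ C, z ∉ M') : H.MComp M' C := by
  have hbM : H.border C ⊆ M := border_subset hC
  have hpath : ∀ a b : α, a ∈ C → H.MPath M a b → H.MPath M' a b := by
    intro a b ha hp
    induction hp with
    | refl => exact Relation.ReflTransGen.refl
    | @tail b' c' hab hstep ih =>
        have hbC : b' ∈ C := stays hbM hab ha
        rcases hstep with ⟨e, he, hxe, hye, hxM, hyM⟩
        have hcC : c' ∈ C := by
          by_contra hc
          exact hyM (hbM (Finset.mem_sdiff.mpr
            ⟨mem_Fr.mpr ⟨e, he, ⟨_, Finset.mem_inter.mpr ⟨hxe, hbC⟩⟩, hye⟩, hc⟩))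
        exact ih.tail ⟨e, he, hxe, hye, hd _ hbC, hd _ hcC⟩
  refine ⟨hC.1, ?_, ?_, ?_⟩
  · intro z hz
    exact Finset.mem_sdiff.mpr ⟨(Finset.mem_sdiff.mp (hC.2.1 hz)).1, hd z hz⟩
  · intro a ha b hb
    exact hpath a b ha (hC.2.2.1 a ha b hb)
  · intro C' hCC' hsub' hconn'
    have hCsub : C' ⊆ C := by
      intro y hy
      obtain ⟨x0, hx0⟩ := hC.1
      exact stays hb (hconn' x0 (hCC' hx0) y hy) hx0
    exact Finset.Subset.antisymm hCsub hCC'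

variable {α : Type} [DecidableEq α] {H1 H2 : HGraph α}

lemma valid' (σ : Strategy H1 H2) {v : Config α} (hv : v ∈ σ.dom)
    (hne : v ≠ initConfig H1) :
    v.1 ∈ H2.edges ∧ v.2.1 ⊆ v.1 ∧ H1.MComp v.2.1 v.2.2 :=
  (σ.valid v hv).resolve_left hne

lemma parent_exists (σ : Strategy H1 H2) {v : Config α} (hv : v ∈ σ.dom)
    (hne : v ≠ initConfig H1) : ∃ p, StratSucc H1 σ.dom σ.move p v := by
  rcases (σ.reach v hv).cases_tail with h | ⟨c, _, hc⟩
  · exact absurd h hne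
  · exact ⟨c, hc⟩

lemma succ_spec {σ : Strategy H1 H2} (hσ : σ.Greedy) {p v : Config α}
    (hs : StratSucc H1 σ.dom σ.move p v) :
    p ∈ σ.dom ∧ v.1 = (σ.move p).1 ∧ v.2.1 = v.1 ∩ H1.Fr p.2.2 ∧
      H1.MComp v.2.1 v.2.2 ∧ H1.MConn (p.2.1 ∩ v.2.1) (p.2.2 ∪ v.2.2) := by
  obtain ⟨hp, h1, h2, hopt⟩ := hs
  have hg := hσ p hp
  refine ⟨hp, h1, ?_, ?_, ?_⟩
  · rw [h2, hg.1, ← h1]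
  · have h3 := hopt.1; rwa [← h2] at h3
  · have h3 := hopt.2; rwa [← h2] at h3

lemma child_calm {σ : Strategy H1 H2} (hσ : σ.Greedy) {p v : Config α}
    (hpne : p ≠ initConfig H1) (hpact : (p.1 ∩ p.2.2).Nonempty)
    (hs : StratSucc H1 σ.dom σ.move p v) :
    v.2.2 ⊆ p.2.2 ∧ v.1 ∩ v.2.2 = ∅ := by
  obtain ⟨hp, h1, hM, hcomp, hconn⟩ := succ_spec hσ hs
  obtain ⟨-, hMsub, hpcomp⟩ := valid' σ hp hpne
  have h1' : v.1 = p.1 := h1.trans ((hσ p hp).2 hpact)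
  have hbord : H1.border p.2.2 ⊆ p.2.1 := border_subset hpcomp
  have hCp_nodes : p.2.2 ⊆ H1.nodes := fun z hz => (Finset.mem_sdiff.mp (hpcomp.2.1 hz)).1
  have hbord2 : H1.border p.2.2 ⊆ p.2.1 ∩ v.2.1 := by
    intro y hy
    refine Finset.mem_inter.mpr ⟨hbord hy, ?_⟩
    rw [hM]
    refine Finset.mem_inter.mpr ⟨?_, (Finset.mem_sdiff.mp hy).1⟩
    rw [h1']
    exact hMsub (hbord hy)
  have hsub : v.2.2 ⊆ p.2.2 := by
    intro y hy
    obtain ⟨z, hz⟩ := hpcomp.1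
    exact stays hbord2 (hconn z (Finset.mem_union_left _ hz) y (Finset.mem_union_right _ hy)) hz
  refine ⟨hsub, ?_⟩
  rw [Finset.eq_empty_iff_forall_notMem]
  intro x hx
  rcases Finset.mem_inter.mp hx with ⟨hx1, hx2⟩
  have hxM : x ∈ v.2.1 := by
    rw [hM]
    refine Finset.mem_inter.mpr ⟨hx1, mem_Fr.mpr ?_⟩
    rcases H1.cover x (hCp_nodes (hsub hx2)) with ⟨e, he, hxe⟩
    exact ⟨e, he, ⟨x, Finset.mem_inter.mpr ⟨hxe, hsub hx2⟩⟩, hxe⟩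
  exact (Finset.mem_sdiff.mp (hcomp.2.1 hx2)).2 hxM

noncomputable def pcode (H1 : HGraph α) (r : Config α) : Option (Finset α × α) :=
  if h : r ≠ initConfig H1 ∧ (r.2.2).Nonempty then some (r.1, h.2.choose) else none

def Dec (H1 : HGraph α) : Option (Finset α × α) → Finset α → Prop
  | none, C => C = H1.nodes
  | some gy, C => gy.2 ∈ C ∧ H1.MComp gy.1 C

lemma dec_unique {c : Option (Finset α × α)} {C C' : Finset α}
    (h : Dec H1 c C) (h' : Dec H1 c C') : C = C' := by
  cases c with
  | none => rw [show C = H1.nodes from h, show C' = H1.nodes from h']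
  | some gy => exact comp_unique h.2 h'.2 h.1 h'.1

lemma pcode_mem (σ : Strategy H1 H2) {r : Config α} (hr : r ∈ σ.dom) :
    pcode H1 r = none ∨ ∃ g y, pcode H1 r = some (g, y) ∧ g ∈ H2.edges ∧ y ∈ H1.nodes := by
  by_cases h : r ≠ initConfig H1 ∧ (r.2.2).Nonempty
  · right
    refine ⟨r.1, h.2.choose, dif_pos h, (valid' σ hr h.1).1, ?_⟩
    exact (Finset.mem_sdiff.mp ((valid' σ hr h.1).2.2.2.1 h.2.choose_spec)).1
  · left; exact dif_neg h

lemma dec_pcode (σ : Strategy H1 H2) {r : Config α} (hr : r ∈ σ.dom)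
    (hcalm : r = initConfig H1 ∨ ¬(r.1 ∩ r.2.2).Nonempty) :
    Dec H1 (pcode H1 r) r.2.2 := by
  by_cases hne : r = initConfig H1
  · have h0 : pcode H1 r = none := dif_neg (by simp [hne])
    rw [h0]
    subst hne
    rfl
  · obtain ⟨-, hMsub, hcomp⟩ := valid' σ hr hne
    have hcond : r ≠ initConfig H1 ∧ (r.2.2).Nonempty := ⟨hne, hcomp.1⟩
    have h0 : pcode H1 r = some (r.1, hcond.2.choose) := dif_pos hcond
    rw [h0]
    have hcalm' : ¬(r.1 ∩ r.2.2).Nonempty := hcalm.resolve_left hne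
    refine ⟨hcond.2.choose_spec, ?_⟩
    refine comp_repin hcomp (fun y hy => hMsub (border_subset hcomp hy)) ?_
    intro z hz hz1
    exact hcalm' ⟨z, Finset.mem_inter.mpr ⟨hz1, hz⟩⟩

noncomputable def ccode (σ : Strategy H1 H2) (v : Config α) :
    Option ((Finset α × α) × Option (Finset α × α)) :=
  if hv : v ≠ initConfig H1 ∧ (v.2.2).Nonempty ∧ ∃ p, StratSucc H1 σ.dom σ.move p v then
    some ((v.1, if hx : (v.1 ∩ v.2.2).Nonempty then hx.choose else hv.2.1.choose),
      if hpa : hv.2.2.choose ≠ initConfig H1 ∧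
          (hv.2.2.choose.1 ∩ hv.2.2.choose.2.2).Nonempty ∧
          ∃ q, StratSucc H1 σ.dom σ.move q hv.2.2.choose then
        pcode H1 hpa.2.2.choose
      else pcode H1 hv.2.2.choose)
  else none

lemma ccode_init (σ : Strategy H1 H2) : ccode σ (initConfig H1) = none :=
  dif_neg (by simp)

lemma ccode_full {σ : Strategy H1 H2} (hσ : σ.Greedy) {v : Config α} (hv : v ∈ σ.dom)
    (hne : v ≠ initConfig H1) :
    ∃ x pc, ccode σ v = some ((v.1, x), pc) ∧
      x ∈ v.2.2 ∧ ((v.1 ∩ v.2.2).Nonempty ↔ x ∈ v.1) ∧ H1.MComp v.2.1 v.2.2 ∧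
      (pc = none ∨ ∃ g y, pc = some (g, y) ∧ g ∈ H2.edges ∧ y ∈ H1.nodes) ∧
      ∃ C0, Dec H1 pc C0 ∧
        (v.2.1 = v.1 ∩ H1.Fr C0 ∨
          (¬(v.1 ∩ v.2.2).Nonempty ∧ ∃ Cm, H1.MComp (v.1 ∩ H1.Fr C0) Cm ∧ x ∈ Cm ∧
            (v.1 ∩ Cm).Nonempty ∧ v.2.1 = v.1 ∩ H1.Fr Cm)) := by
  have hval := valid' σ hv hne
  have hcond : v ≠ initConfig H1 ∧ (v.2.2).Nonempty ∧ ∃ p, StratSucc H1 σ.dom σ.move p v :=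
    ⟨hne, hval.2.2.1, parent_exists σ hv hne⟩
  have hps : StratSucc H1 σ.dom σ.move hcond.2.2.choose v := hcond.2.2.choose_spec
  have hxC : (if hx : (v.1 ∩ v.2.2).Nonempty then hx.choose else hcond.2.1.choose) ∈ v.2.2 := by
    by_cases hact : (v.1 ∩ v.2.2).Nonempty
    · rw [dif_pos hact]
      exact (Finset.mem_inter.mp hact.choose_spec).2
    · rw [dif_neg hact]
      exact hcond.2.1.choose_spec
  refine ⟨_, _, dif_pos hcond, hxC, ?_, hval.2.2, ?_, ?_⟩
  · by_cases hact : (v.1 ∩ v.2.2).Nonempty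
    · rw [dif_pos hact]
      exact iff_of_true hact (Finset.mem_inter.mp hact.choose_spec).1
    · rw [dif_neg hact]
      refine iff_of_false hact ?_
      intro h1
      exact hact ⟨_, Finset.mem_inter.mpr ⟨h1, hcond.2.1.choose_spec⟩⟩
  · by_cases hpa : hcond.2.2.choose ≠ initConfig H1 ∧
        (hcond.2.2.choose.1 ∩ hcond.2.2.choose.2.2).Nonempty ∧
        ∃ q, StratSucc H1 σ.dom σ.move q hcond.2.2.choose
    · rw [dif_pos hpa]
      exact pcode_mem σ hpa.2.2.choose_spec.1
    · rw [dif_neg hpa]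
      exact pcode_mem σ hps.1
  · by_cases hpa : hcond.2.2.choose ≠ initConfig H1 ∧
        (hcond.2.2.choose.1 ∩ hcond.2.2.choose.2.2).Nonempty ∧
        ∃ q, StratSucc H1 σ.dom σ.move q hcond.2.2.choose
    · -- the chosen parent is "active"; go to the grandparent
      rw [dif_pos hpa]
      set p := hcond.2.2.choose with hpdef
      set q := hpa.2.2.choose with hqdef
      have hqs : StratSucc H1 σ.dom σ.move q p := hpa.2.2.choose_spec
      have hq_dom : q ∈ σ.dom := hqs.1
      have hq_calm : q = initConfig H1 ∨ ¬(q.1 ∩ q.2.2).Nonempty := by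
        by_cases hqne : q = initConfig H1
        · exact Or.inl hqne
        · by_cases hqact : (q.1 ∩ q.2.2).Nonempty
          · have hcc := (child_calm hσ hqne hqact hqs).2
            exact absurd hpa.2.1 (by rw [hcc]; simp)
          · exact Or.inr hqact
      have hcc := child_calm hσ hpa.1 hpa.2.1 hps
      have h1p : v.1 = p.1 := (succ_spec hσ hps).2.1.trans ((hσ p hps.1).2 hpa.2.1)
      have hpM : p.2.1 = p.1 ∩ H1.Fr q.2.2 := (succ_spec hσ hqs).2.2.1
      refine ⟨q.2.2, dec_pcode σ hq_dom hq_calm, Or.inr ⟨?_, p.2.2, ?_, ?_, ?_, ?_⟩⟩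
      · rw [hcc.2]; simp
      · have hc2 := (valid' σ hps.1 hpa.1).2.2
        rwa [hpM, ← h1p] at hc2
      · exact hcc.1 hxC
      · rw [h1p]; exact hpa.2.1
      · exact (succ_spec hσ hps).2.2.1
    · rw [dif_neg hpa]
      set p := hcond.2.2.choose with hpdef
      have hp_calm : p = initConfig H1 ∨ ¬(p.1 ∩ p.2.2).Nonempty := by
        by_cases hpne : p = initConfig H1
        · exact Or.inl hpne
        · by_cases hpact : (p.1 ∩ p.2.2).Nonempty
          · exact absurd ⟨hpne, hpact, parent_exists σ hps.1 hpne⟩ hpa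
          · exact Or.inr hpact
      exact ⟨p.2.2, dec_pcode σ hps.1 hp_calm, Or.inl (succ_spec hσ hps).2.2.1⟩

lemma ccode_injOn {σ : Strategy H1 H2} (hσ : σ.Greedy) : Set.InjOn (ccode σ) σ.dom := by
  intro v hv v' hv' heq
  by_cases hne : v = initConfig H1
  · by_cases hne' : v' = initConfig H1
    · rw [hne, hne']
    · obtain ⟨x, pc, hc, -⟩ := ccode_full hσ hv' hne'
      rw [hne, ccode_init, hc] at heq
      exact absurd heq (by simp)
  · by_cases hne' : v' = initConfig H1
    · obtain ⟨x, pc, hc, -⟩ := ccode_full hσ hv hne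
      rw [hne', hc, ccode_init] at heq
      exact absurd heq (by simp)
    · obtain ⟨x, pc, hc, hxC, hiff, hcomp, -, C0, hdec, hcase⟩ := ccode_full hσ hv hne
      obtain ⟨x', pc', hc', hxC', hiff', hcomp', -, C0', hdec', hcase'⟩ := ccode_full hσ hv' hne'
      rw [hc, hc'] at heq
      rw [Option.some.injEq, Prod.mk.injEq, Prod.mk.injEq] at heq
      obtain ⟨⟨h1, hx⟩, hpc⟩ := heq
      subst hx
      subst hpc
      have hC0 : C0 = C0' := dec_unique hdec hdec'
      have hMeq : v.2.1 = v'.2.1 := by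
        rcases hcase with hA | ⟨hcalm, Cm, hCm, hxCm, hact, hMv⟩
        · rcases hcase' with hA' | ⟨hcalm', Cm', hCm', hxCm', hact', hMv'⟩
          · rw [hA, hA', h1, hC0]
          · -- v via direct rule, v' via grandparent rule: impossible
            exfalso
            rw [← hC0, ← h1, ← hA] at hCm'
            have hCeq : v.2.2 = Cm' := comp_unique hcomp hCm' hxC hxCm'
            have hxin : x ∈ v.1 := hiff.mp (by rw [h1, hCeq]; exact hact')
            exact hcalm' (hiff'.mpr (h1 ▸ hxin))
        · rcases hcase' with hA' | ⟨hcalm', Cm', hCm', hxCm', hact', hMv'⟩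
          · exfalso
            rw [hC0, h1, ← hA'] at hCm
            have hCeq : v'.2.2 = Cm := comp_unique hcomp' hCm hxC' hxCm
            have hxin : x ∈ v'.1 := hiff'.mp (by rw [← h1, hCeq]; exact hact)
            exact hcalm (hiff.mpr (by rw [h1]; exact hxin))
          · rw [← hC0, ← h1] at hCm'
            have hCmeq : Cm = Cm' := comp_unique hCm hCm' hxCm hxCm'
            rw [hMv, hMv', hCmeq, h1]
      have hCeq2 : v.2.2 = v'.2.2 := by
        have hcomp'' := hcomp'
        rw [← hMeq] at hcomp''
        exact comp_unique hcomp hcomp'' hxC hxC'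
      exact Prod.ext h1 (Prod.ext hMeq hCeq2)

end RCGreedy

end RCGreedyAux

/-- The number of configurations in the domain of any greedy strategy in the
Robber and Captain game on `(H1, H2)` is at most
`|edges(H2)| · |nodes(H1)| · (|edges(H2)| · |nodes(H1)| + 1) + 1`. -/
theorem greedy_strategy_domain_bound {α : Type} [DecidableEq α]
    (H1 H2 : HGraph α) (hnodes : H1.nodes = H2.nodes)
    (σ : Strategy H1 H2) (hσ : σ.Greedy) :
    σ.dom.Finite ∧
      σ.dom.ncard ≤
        H2.edges.card * H1.nodes.card * (H2.edges.card * H1.nodes.card + 1) + 1 := by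
  classical
  let P : Finset (Finset α × α) := H2.edges ×ˢ H1.nodes
  let Q : Finset (Option (Finset α × α)) := insert none (P.image some)
  let T : Finset (Option ((Finset α × α) × Option (Finset α × α))) :=
    insert none ((P ×ˢ Q).image some)
  have hmaps : ∀ v ∈ σ.dom, RCGreedy.ccode σ v ∈ T := by
    intro v hv
    by_cases hne : v = initConfig H1
    · rw [hne, RCGreedy.ccode_init]
      exact Finset.mem_insert_self _ _
    · obtain ⟨x, pc, hc, hxC, -, hcomp, hpcmem, -⟩ := RCGreedy.ccode_full hσ hv hne
      rw [hc]
      refine Finset.mem_insert_of_mem (Finset.mem_image_of_mem _ ?_)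
      refine Finset.mem_product.mpr ⟨Finset.mem_product.mpr ⟨(RCGreedy.valid' σ hv hne).1, ?_⟩, ?_⟩
      · exact (Finset.mem_sdiff.mp (hcomp.2.1 hxC)).1
      · rcases hpcmem with h0 | ⟨g, y, h0, hg, hy⟩
        · rw [h0]; exact Finset.mem_insert_self _ _
        · rw [h0]
          refine Finset.mem_insert_of_mem (Finset.mem_image_of_mem _ ?_)
          exact Finset.mem_product.mpr ⟨hg, hy⟩
  have hinj : Set.InjOn (RCGreedy.ccode σ) σ.dom := RCGreedy.ccode_injOn hσ
  have himg : RCGreedy.ccode σ '' σ.dom ⊆ ↑T := by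
    rintro _ ⟨v, hv, rfl⟩
    exact hmaps v hv
  have hfin : σ.dom.Finite := Set.Finite.of_finite_image (T.finite_toSet.subset himg) hinj
  refine ⟨hfin, ?_⟩
  have hPcard : P.card = H2.edges.card * H1.nodes.card := Finset.card_product _ _
  have hQcard : Q.card = H2.edges.card * H1.nodes.card + 1 := by
    have : Q.card = (P.image some).card + 1 := Finset.card_insert_of_notMem (by simp)
    rw [this, Finset.card_image_of_injective _ (Option.some_injective _), hPcard]
  have hTcard : T.card =
      H2.edges.card * H1.nodes.card * (H2.edges.card * H1.nodes.card + 1) + 1 := by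
    have : T.card = ((P ×ˢ Q).image some).card + 1 := Finset.card_insert_of_notMem (by simp)
    rw [this, Finset.card_image_of_injective _ (Option.some_injective _),
      Finset.card_product, hPcard, hQcard]
  calc σ.dom.ncard = (RCGreedy.ccode σ '' σ.dom).ncard := (Set.ncard_image_of_injOn hinj).symm
    _ ≤ (↑T : Set (Option ((Finset α × α) × Option (Finset α × α)))).ncard :=
        Set.ncard_le_ncard himg T.finite_toSet
    _ = T.card := Set.ncard_coe_finset T
    _ = _ := hTcard
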